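/- Let V : L^p(∂ℝⁿ₊) → L^q(ℝⁿ₊) be a bounded sublinear operator with 1 < p < q < ∞ that is also bounded from the Lorentz space L^{p,q}(∂ℝⁿ₊) to L^q(ℝⁿ₊). Then for every f ∈ L^p(∂ℝⁿ₊), ‖V(f)‖_{L^q} ≤ C ‖f‖_{L^{p,∞}}^(1−p/q) ‖f‖_{L^p}^(p/q). -/

import Mathlib

open MeasureTheory
open scoped ENNReal

/-- The decreasing rearrangement `f*` of a function, as an `ℝ≥0∞`-valued function of `t > 0`. -/
noncomputable def decRearrangement {α : Type*} [MeasurableSpace α] (μ : Measure α)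
    (f : α → ℝ) (t : ℝ) : ℝ≥0∞ :=
  sInf {s : ℝ≥0∞ | μ {x | s < ENNReal.ofReal |f x|} ≤ ENNReal.ofReal t}

/-- The Lorentz quasi-norm `‖f‖_{L^{p,s}} = (∫₀^∞ (t^{1/p} f*(t))^s dt/t)^{1/s}`. -/
noncomputable def lorentzNorm {α : Type*} [MeasurableSpace α] (μ : Measure α)
    (f : α → ℝ) (p s : ℝ) : ℝ≥0∞ :=
  (∫⁻ t in Set.Ioi (0 : ℝ),
      (ENNReal.ofReal (t ^ (1 / p)) * decRearrangement μ f t) ^ s * ENNReal.ofReal (1 / t)) ^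
    (1 / s)

/-- The weak `L^p` (Lorentz `L^{p,∞}`) quasi-norm `sup_{t>0} t^{1/p} f*(t)`. -/
noncomputable def weakLorentzNorm {α : Type*} [MeasurableSpace α] (μ : Measure α)
    (f : α → ℝ) (p : ℝ) : ℝ≥0∞ :=
  ⨆ (t : ℝ) (_ : 0 < t), ENNReal.ofReal (t ^ (1 / p)) * decRearrangement μ f t

section Aux

open Set

variable {α : Type*} [MeasurableSpace α] {μ : Measure α} {f : α → ℝ} {p q : ℝ}

lemma decRearrangement_le {s : ℝ≥0∞} {t : ℝ}
    (h : μ {x | s < ENNReal.ofReal |f x|} ≤ ENNReal.ofReal t) :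
    decRearrangement μ f t ≤ s := sInf_le h

lemma lt_meas_of_lt_decRearrangement {s : ℝ≥0∞} {t : ℝ}
    (h : s < decRearrangement μ f t) :
    ENNReal.ofReal t < μ {x | s < ENNReal.ofReal |f x|} := by
  by_contra hc
  exact absurd (decRearrangement_le (not_lt.mp hc)) (not_le.mpr h)

lemma decRearrangement_antitone (μ : Measure α) (f : α → ℝ) :
    Antitone (decRearrangement μ f) := fun _ _ h =>
  sInf_le_sInf fun _ hs => hs.trans (ENNReal.ofReal_le_ofReal h)

lemma eLpNorm_rpow_eq (hp : 0 < p) (f : α → ℝ) :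
    eLpNorm f (ENNReal.ofReal p) μ ^ p = ∫⁻ x, ENNReal.ofReal (|f x| ^ p) ∂μ := by
  rw [eLpNorm_eq_lintegral_rpow_enorm_toReal (ENNReal.ofReal_pos.mpr hp).ne' (by simp)]
  rw [ENNReal.toReal_ofReal hp.le, ← ENNReal.rpow_mul, one_div,
    inv_mul_cancel₀ hp.ne', ENNReal.rpow_one]
  congr 1
  funext x
  rw [← ENNReal.ofReal_rpow_of_nonneg (abs_nonneg _) hp.le, ← Real.norm_eq_abs,
    ofReal_norm_eq_enorm]

lemma decRearrangement_ne_top (hp : 0 < p) (hf : MemLp f (ENNReal.ofReal p) μ)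
    {t : ℝ} (ht : 0 < t) : decRearrangement μ f t ≠ ⊤ := by
  have hIlt : (∫⁻ x, ENNReal.ofReal (|f x| ^ p) ∂μ) < ⊤ := by
    rw [← eLpNorm_rpow_eq hp]
    exact ENNReal.rpow_lt_top_of_nonneg hp.le hf.2.ne
  set I := ∫⁻ x, ENNReal.ofReal (|f x| ^ p) ∂μ with hI
  obtain ⟨n, hn⟩ := ENNReal.exists_nat_gt (ENNReal.div_lt_top hIlt.ne
    (by simp [ht] : ENNReal.ofReal t ≠ 0)).ne
  set s : ℝ := ((n : ℝ) + 1) ^ (1 / p) with hs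
  have hspos : 0 < s := Real.rpow_pos_of_pos (by positivity) _
  have hsp : ENNReal.ofReal (s ^ p) = (n : ℝ≥0∞) + 1 := by
    rw [hs, ← Real.rpow_mul (by positivity), one_div, inv_mul_cancel₀ hp.ne',
      Real.rpow_one]
    rw [ENNReal.ofReal_add (by positivity) zero_le_one, ENNReal.ofReal_natCast,
      ENNReal.ofReal_one]
  have key : μ {x | ENNReal.ofReal s < ENNReal.ofReal |f x|} ≤ ENNReal.ofReal t := by
    have hfm : AEMeasurable f μ := hf.1.aemeasurable
    have markov : ENNReal.ofReal (s ^ p) * μ {x | ENNReal.ofReal s < ENNReal.ofReal |f x|} ≤ I := by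
      have hmono : {x | ENNReal.ofReal s < ENNReal.ofReal |f x|} ⊆
          {x | ENNReal.ofReal (s ^ p) ≤ ENNReal.ofReal (|f x| ^ p)} := by
        intro x hx
        simp only [mem_setOf_eq] at hx ⊢
        have : s < |f x| := by
          rcases lt_or_ge s (|f x|) with h | h
          · exact h
          · exact absurd (ENNReal.ofReal_le_ofReal h) (not_le.mpr hx)
        exact ENNReal.ofReal_le_ofReal (Real.rpow_le_rpow hspos.le this.le hp.le)
      calc ENNReal.ofReal (s ^ p) * μ {x | ENNReal.ofReal s < ENNReal.ofReal |f x|}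
          ≤ ENNReal.ofReal (s ^ p) *
            μ {x | ENNReal.ofReal (s ^ p) ≤ ENNReal.ofReal (|f x| ^ p)} :=
            mul_le_mul_right (measure_mono hmono) _
        _ ≤ I := mul_meas_ge_le_lintegral₀ (by fun_prop) _
    have hsp0 : ENNReal.ofReal (s ^ p) ≠ 0 := by
      rw [hsp]; exact (lt_of_lt_of_le zero_lt_one le_add_self).ne'
    have hspt : ENNReal.ofReal (s ^ p) ≠ ⊤ := ENNReal.ofReal_ne_top
    have h1 : μ {x | ENNReal.ofReal s < ENNReal.ofReal |f x|} ≤ I / ENNReal.ofReal (s ^ p) := by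
      rw [ENNReal.le_div_iff_mul_le (Or.inl hsp0) (Or.inl hspt), mul_comm]
      exact markov
    refine h1.trans ?_
    apply ENNReal.div_le_of_le_mul
    rw [hsp]
    have h2 : I ≤ (n : ℝ≥0∞) * ENNReal.ofReal t := by
      rw [← ENNReal.div_le_iff_le_mul (Or.inl (by simp [ht])) (Or.inl ENNReal.ofReal_ne_top)]
      exact hn.le
    refine h2.trans ?_
    rw [mul_comm (ENNReal.ofReal t)]
    exact mul_le_mul_left le_self_add _
  exact ((decRearrangement_le key).trans_lt ENNReal.ofReal_lt_top).ne

lemma lintegral_decRearrangement_rpow_le (hp : 0 < p) (hf : MemLp f (ENNReal.ofReal p) μ) :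
    ∫⁻ t in Ioi (0:ℝ), (decRearrangement μ f t) ^ p ≤
      ∫⁻ x, ENNReal.ofReal (|f x| ^ p) ∂μ := by
  set g : ℝ → ℝ := fun t => (decRearrangement μ f t).toReal with hg
  have gmble : Measurable g :=
    ENNReal.measurable_toReal.comp (decRearrangement_antitone μ f).measurable
  have step1 : ∫⁻ t in Ioi (0:ℝ), (decRearrangement μ f t) ^ p =
      ∫⁻ t in Ioi (0:ℝ), ENNReal.ofReal (g t ^ p) := by
    refine setLIntegral_congr_fun measurableSet_Ioi (fun t ht => ?_)
    rw [hg]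
    rw [← ENNReal.ofReal_rpow_of_nonneg ENNReal.toReal_nonneg hp.le,
      ENNReal.ofReal_toReal (decRearrangement_ne_top hp hf ht)]
  have step2 : ∫⁻ t in Ioi (0:ℝ), ENNReal.ofReal (g t ^ p) =
      ENNReal.ofReal p * ∫⁻ s in Ioi (0:ℝ),
        (volume.restrict (Ioi (0:ℝ))) {t | s < g t} * ENNReal.ofReal (s ^ (p - 1)) :=
    lintegral_rpow_eq_lintegral_meas_lt_mul (volume.restrict (Ioi (0:ℝ)))
      (ae_of_all _ fun t => ENNReal.toReal_nonneg) gmble.aemeasurable hp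
  have step3 : ∀ s ∈ Ioi (0:ℝ), (volume.restrict (Ioi (0:ℝ))) {t | s < g t} ≤
      μ {x | s < |f x|} := by
    intro s hs
    have hseq : {x | ENNReal.ofReal s < ENNReal.ofReal |f x|} = {x | s < |f x|} := by
      ext x
      exact ENNReal.ofReal_lt_ofReal_iff_of_nonneg (le_of_lt hs)
    set D := μ {x | s < |f x|} with hD
    rcases eq_or_ne D ⊤ with hDt | hDt
    · rw [hDt]; exact le_top
    rw [Measure.restrict_apply' measurableSet_Ioi]
    have hsub : {t | s < g t} ∩ Ioi (0:ℝ) ⊆ Ioc 0 D.toReal := by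
      rintro t ⟨htg, ht⟩
      have h1 : ENNReal.ofReal s < decRearrangement μ f t := by
        rw [ENNReal.ofReal_lt_iff_lt_toReal (le_of_lt hs)
          (decRearrangement_ne_top hp hf ht)]
        exact htg
      have h2 := lt_meas_of_lt_decRearrangement h1
      rw [hseq, ← hD] at h2
      exact ⟨ht, ((ENNReal.ofReal_lt_iff_lt_toReal (le_of_lt ht) hDt).mp h2).le⟩
    calc volume ({t | s < g t} ∩ Ioi (0:ℝ)) ≤ volume (Ioc 0 D.toReal) :=
          measure_mono hsub
      _ = ENNReal.ofReal D.toReal := by rw [Real.volume_Ioc, sub_zero]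
      _ = D := ENNReal.ofReal_toReal hDt
  have step4 : ENNReal.ofReal p * ∫⁻ s in Ioi (0:ℝ),
        μ {x | s < |f x|} * ENNReal.ofReal (s ^ (p - 1)) =
      ∫⁻ x, ENNReal.ofReal (|f x| ^ p) ∂μ := by
    refine (lintegral_rpow_eq_lintegral_meas_lt_mul μ
      (ae_of_all _ fun x => abs_nonneg _) ?_ hp).symm
    have := hf.1.aemeasurable
    fun_prop
  rw [step1, step2, ← step4]
  exact mul_le_mul_right (lintegral_mono_ae ((ae_restrict_iff' measurableSet_Ioi).mpr
    (ae_of_all _ fun s hs => mul_le_mul_left (step3 s hs) _))) _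

lemma lorentz_interp (hp : 0 < p) (hpq : p < q) (hf : MemLp f (ENNReal.ofReal p) μ)
    (hW : weakLorentzNorm μ f p ≠ ⊤) :
    lorentzNorm μ f p q ≤
      weakLorentzNorm μ f p ^ (1 - p / q) * eLpNorm f (ENNReal.ofReal p) μ ^ (p / q) := by
  have hq : 0 < q := hp.trans hpq
  set W := weakLorentzNorm μ f p with hWdef
  set L := eLpNorm f (ENNReal.ofReal p) μ with hLdef
  have key : (∫⁻ t in Set.Ioi (0 : ℝ),
      (ENNReal.ofReal (t ^ (1 / p)) * decRearrangement μ f t) ^ q * ENNReal.ofReal (1 / t)) ≤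
      W ^ (q - p) * L ^ p := by
    have ptwise : ∀ t ∈ Set.Ioi (0:ℝ),
        (ENNReal.ofReal (t ^ (1 / p)) * decRearrangement μ f t) ^ q * ENNReal.ofReal (1 / t) ≤
        W ^ (q - p) * (decRearrangement μ f t) ^ p := by
      intro t ht
      set A := ENNReal.ofReal (t ^ (1 / p)) * decRearrangement μ f t with hA
      have hAW : A ≤ W := by
        rw [hWdef, weakLorentzNorm]
        exact le_iSup₂ (f := fun (t : ℝ) (_ : 0 < t) =>
          ENNReal.ofReal (t ^ (1 / p)) * decRearrangement μ f t) t ht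
      rcases eq_or_ne A 0 with hA0 | hA0
      · rw [hA0, ENNReal.zero_rpow_of_pos hq, zero_mul]
        exact zero_le
      have hAtop : A ≠ ⊤ := (hAW.trans_lt (lt_top_iff_ne_top.mpr hW)).ne
      have hsplit : A ^ q = A ^ (q - p) * A ^ p := by
        rw [← ENNReal.rpow_add _ _ hA0 hAtop, sub_add_cancel]
      have hAp : A ^ p * ENNReal.ofReal (1 / t) = (decRearrangement μ f t) ^ p := by
        rw [hA, ENNReal.mul_rpow_of_nonneg _ _ hp.le,
          ENNReal.ofReal_rpow_of_pos (Real.rpow_pos_of_pos ht _),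
          ← Real.rpow_mul (le_of_lt ht), one_div, inv_mul_cancel₀ hp.ne', Real.rpow_one]
        rw [mul_comm (ENNReal.ofReal t), mul_assoc, ← ENNReal.ofReal_mul (le_of_lt ht),
          mul_one_div_cancel (ne_of_gt ht), ENNReal.ofReal_one, mul_one]
      calc A ^ q * ENNReal.ofReal (1 / t) = A ^ (q - p) * (A ^ p * ENNReal.ofReal (1 / t)) := by
            rw [hsplit, mul_assoc]
        _ ≤ W ^ (q - p) * (decRearrangement μ f t) ^ p := by
            rw [hAp]
            exact mul_le_mul_left (ENNReal.rpow_le_rpow hAW (by linarith)) _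
    calc (∫⁻ t in Set.Ioi (0 : ℝ),
        (ENNReal.ofReal (t ^ (1 / p)) * decRearrangement μ f t) ^ q * ENNReal.ofReal (1 / t))
        ≤ ∫⁻ t in Set.Ioi (0:ℝ), W ^ (q - p) * (decRearrangement μ f t) ^ p :=
          lintegral_mono_ae ((ae_restrict_iff' measurableSet_Ioi).mpr
            (ae_of_all _ ptwise))
      _ = W ^ (q - p) * ∫⁻ t in Set.Ioi (0:ℝ), (decRearrangement μ f t) ^ p :=
          lintegral_const_mul' _ _ (ENNReal.rpow_ne_top_of_nonneg (by linarith) hW)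
      _ ≤ W ^ (q - p) * L ^ p := by
          rw [hLdef, eLpNorm_rpow_eq hp]
          exact mul_le_mul_right (lintegral_decRearrangement_rpow_le hp hf) _
  calc lorentzNorm μ f p q ≤ (W ^ (q - p) * L ^ p) ^ (1 / q) :=
        ENNReal.rpow_le_rpow key (by positivity)
    _ = W ^ (1 - p / q) * L ^ (p / q) := by
        rw [ENNReal.mul_rpow_of_nonneg _ _ (by positivity), ← ENNReal.rpow_mul,
          ← ENNReal.rpow_mul]
        congr 1
        · congr 1; field_simp
        · congr 1; field_simp

end Aux

theorem stmt8 {α β : Type*} [MeasurableSpace α] [MeasurableSpace β]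
    (μ : Measure α) (ν : Measure β) (p q : ℝ) (hp : 1 < p) (hpq : p < q)
    (V : (α → ℝ) → (β → ℝ))
    (hsub : ∀ f g x, |V (f + g) x| ≤ |V f x| + |V g x|)
    (C₀ C₁ : ℝ≥0∞) (hC₀ : C₀ < ⊤) (hC₁ : C₁ < ⊤)
    (hbdd : ∀ f : α → ℝ,
      eLpNorm (V f) (ENNReal.ofReal q) ν ≤ C₀ * eLpNorm f (ENNReal.ofReal p) μ)
    (hlor : ∀ f : α → ℝ,
      eLpNorm (V f) (ENNReal.ofReal q) ν ≤ C₁ * lorentzNorm μ f p q) :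
    ∃ C : ℝ≥0∞, C < ⊤ ∧
      ∀ f : α → ℝ, MemLp f (ENNReal.ofReal p) μ →
        eLpNorm (V f) (ENNReal.ofReal q) ν ≤
          C * weakLorentzNorm μ f p ^ (1 - p / q) *
            eLpNorm f (ENNReal.ofReal p) μ ^ (p / q) := by
  have hp0 : 0 < p := lt_trans one_pos hp
  have hq0 : 0 < q := hp0.trans hpq
  have hexp : 0 < 1 - p / q := by
    rw [sub_pos, div_lt_one hq0]
    exact hpq
  refine ⟨C₁, hC₁, fun f hf => ?_⟩
  by_cases hL0 : eLpNorm f (ENNReal.ofReal p) μ = 0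
  · refine le_trans (hbdd f) ?_
    rw [hL0, mul_zero]
    exact zero_le
  rcases eq_or_ne C₁ 0 with hC10 | hC10
  · refine le_trans (hlor f) ?_
    rw [hC10, zero_mul]
    exact zero_le
  by_cases hW : weakLorentzNorm μ f p = ⊤
  · have : C₁ * weakLorentzNorm μ f p ^ (1 - p / q) *
        eLpNorm f (ENNReal.ofReal p) μ ^ (p / q) = ⊤ := by
      rw [hW, ENNReal.top_rpow_of_pos hexp, ENNReal.mul_top hC10]
      rw [ENNReal.top_mul]
      intro h
      rw [ENNReal.rpow_eq_zero_iff] at h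
      rcases h with ⟨h1, _⟩ | ⟨_, h2⟩
      · exact hL0 h1
      · exact absurd h2 (not_lt.mpr (by positivity))
    rw [this]
    exact le_top
  refine le_trans (hlor f) ?_
  rw [mul_assoc]
  exact mul_le_mul_right (lorentz_interp hp0 hpq hf hW) _
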